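/- Let G be a finite non-abelian group, H ≤ G, and g ∈ G \ C_G(H). If A, B are subgroups of H with C_H(g) ≤ A < B ≤ H, then d(B,G) < d(A,G). -/

import Mathlib

/-- The relative commutativity degree `d(H,G)` of a subgroup `H` of a group `G`. -/
noncomputable def relCommDeg {G : Type*} [Group G] (H : Subgroup G) : ℚ :=
  (Nat.card {p : H × G // (p.1 : G) * p.2 = p.2 * (p.1 : G)} : ℚ) /
    ((Nat.card H : ℚ) * (Nat.card G : ℚ))

/-- The set `D(G)` of all relative commutativity degrees of `G`. -/
noncomputable def commDegSet (G : Type*) [Group G] : Set ℚ :=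
  {q | ∃ H : Subgroup G, relCommDeg H = q}

section Aux

variable {G : Type*} [Group G] [Finite G]

open Subgroup

lemma aux_card_mul_relindex {A B : Subgroup G} (h : A ≤ B) :
    Nat.card B = Nat.card A * A.relIndex B := by
  rw [relIndex, ← Subgroup.card_mul_index (A.subgroupOf B),
    Nat.card_congr (Subgroup.subgroupOfEquivOfLe h).toEquiv]

lemma aux_key (A B C : Subgroup G) (hAB : A ≤ B) :
    Nat.card (C ⊓ B : Subgroup G) * Nat.card A ≤
      Nat.card (C ⊓ A : Subgroup G) * Nat.card B := by
  have h1 : C ⊓ A ≤ C ⊓ B := inf_le_inf_left _ hAB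
  have hCA : A ⊓ (C ⊓ B) = C ⊓ A := by
    rw [inf_left_comm, inf_eq_left.mpr hAB]
  have hne : A.relIndex B ≠ 0 := by
    rw [relIndex]
    exact Subgroup.index_ne_zero_of_finite
  have h3 : (C ⊓ A).relIndex (C ⊓ B) ≤ A.relIndex B := by
    rw [← hCA, inf_relIndex_right]
    exact relIndex_le_of_le_right inf_le_right hne
  rw [aux_card_mul_relindex h1, aux_card_mul_relindex hAB]
  calc Nat.card (C ⊓ A : Subgroup G) * (C ⊓ A).relIndex (C ⊓ B) * Nat.card A
      ≤ Nat.card (C ⊓ A : Subgroup G) * A.relIndex B * Nat.card A := by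
        exact Nat.mul_le_mul_right _ (Nat.mul_le_mul_left _ h3)
    _ = Nat.card (C ⊓ A : Subgroup G) * (Nat.card A * A.relIndex B) := by ring

/-- Fiberwise decomposition of the commuting-pairs count. -/
lemma aux_count (K : Subgroup G) [Fintype G] :
    Nat.card {p : K × G // (p.1 : G) * p.2 = p.2 * (p.1 : G)} =
      ∑ x : G, Nat.card (Subgroup.centralizer {x} ⊓ K : Subgroup G) := by
  classical
  have e : {p : K × G // (p.1 : G) * p.2 = p.2 * (p.1 : G)} ≃
      Σ x : G, {k : K // (k : G) * x = x * (k : G)} :=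
    { toFun := fun p => ⟨p.1.2, p.1.1, p.2⟩
      invFun := fun s => ⟨(s.2.1, s.1), s.2.2⟩
      left_inv := by rintro ⟨⟨k, x⟩, h⟩; rfl
      right_inv := by rintro ⟨x, k, h⟩; rfl }
  rw [Nat.card_congr e]
  have e2 : ∀ x : G, {k : K // (k : G) * x = x * (k : G)} ≃
      (Subgroup.centralizer {x} ⊓ K : Subgroup G) := by
    intro x
    exact
      { toFun := fun k => ⟨k.1.1, Subgroup.mem_inf.mpr
          ⟨Subgroup.mem_centralizer_singleton_iff.mpr k.2, k.1.2⟩⟩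
        invFun := fun y => ⟨⟨y.1, (Subgroup.mem_inf.mp y.2).2⟩,
          Subgroup.mem_centralizer_singleton_iff.mp (Subgroup.mem_inf.mp y.2).1⟩
        left_inv := by rintro ⟨⟨y, hy⟩, h⟩; rfl
        right_inv := by rintro ⟨y, hy⟩; rfl }
  haveI : ∀ x : G, Fintype {k : K // (k : G) * x = x * (k : G)} := fun x =>
    Fintype.ofFinite _
  rw [Nat.card_eq_fintype_card, Fintype.card_sigma]
  exact Finset.sum_congr rfl fun x _ => by
    rw [← Nat.card_eq_fintype_card, Nat.card_congr (e2 x)]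

end Aux

theorem relCommDeg_lt_of_centralizer_chain (G : Type*) [Group G] [Finite G]
    (hG : ¬ ∀ a b : G, a * b = b * a) (H : Subgroup G) (g : G)
    (hg : g ∉ Subgroup.centralizer (H : Set G))
    (A B : Subgroup G) (hCA : Subgroup.centralizer {g} ⊓ H ≤ A)
    (hAB : A < B) (hBH : B ≤ H) :
    relCommDeg B < relCommDeg A := by
  classical
  haveI : Fintype G := Fintype.ofFinite G
  have hA := aux_count A
  have hB := aux_count B
  -- cardinalities are positive
  have hApos : 0 < Nat.card A := Nat.card_pos
  have hBpos : 0 < Nat.card B := Nat.card_pos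
  have hGpos : 0 < Nat.card G := Nat.card_pos
  -- strict card inequality
  have hcardlt : Nat.card A < Nat.card B := by
    rw [← SetLike.coe_sort_coe A, ← SetLike.coe_sort_coe B,
      Nat.card_coe_set_eq, Nat.card_coe_set_eq]
    exact Set.ncard_lt_ncard (SetLike.coe_ssubset_coe.mpr hAB) (Set.toFinite _)
  -- key pointwise inequality
  have hpt : ∀ x : G,
      Nat.card (Subgroup.centralizer {x} ⊓ B : Subgroup G) * Nat.card A ≤
        Nat.card (Subgroup.centralizer {x} ⊓ A : Subgroup G) * Nat.card B :=
    fun x => aux_key A B _ hAB.le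
  -- strict at g
  have hg_eq : Subgroup.centralizer {g} ⊓ B = Subgroup.centralizer {g} ⊓ A := by
    apply le_antisymm
    · exact le_inf inf_le_left (le_trans (inf_le_inf_left _ hBH) hCA)
    · exact inf_le_inf_left _ hAB.le
  have hgpos : 0 < Nat.card (Subgroup.centralizer {g} ⊓ A : Subgroup G) :=
    Nat.card_pos
  have hgt : Nat.card (Subgroup.centralizer {g} ⊓ B : Subgroup G) * Nat.card A <
      Nat.card (Subgroup.centralizer {g} ⊓ A : Subgroup G) * Nat.card B := by
    rw [hg_eq]
    exact (Nat.mul_lt_mul_left hgpos).mpr hcardlt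
  -- sum inequality
  have hsum : (∑ x : G, Nat.card (Subgroup.centralizer {x} ⊓ B : Subgroup G)) *
        Nat.card A <
      (∑ x : G, Nat.card (Subgroup.centralizer {x} ⊓ A : Subgroup G)) *
        Nat.card B := by
    rw [Finset.sum_mul, Finset.sum_mul]
    exact Finset.sum_lt_sum (fun x _ => hpt x) ⟨g, Finset.mem_univ g, hgt⟩
  have hnat : Nat.card {p : B × G // (p.1 : G) * p.2 = p.2 * (p.1 : G)} *
        (Nat.card A * Nat.card G) <
      Nat.card {p : A × G // (p.1 : G) * p.2 = p.2 * (p.1 : G)} *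
        (Nat.card B * Nat.card G) := by
    rw [hA, hB]
    calc (∑ x : G, Nat.card (Subgroup.centralizer {x} ⊓ B : Subgroup G)) *
          (Nat.card A * Nat.card G)
        = ((∑ x : G, Nat.card (Subgroup.centralizer {x} ⊓ B : Subgroup G)) *
            Nat.card A) * Nat.card G := (Nat.mul_assoc _ _ _).symm
      _ < ((∑ x : G, Nat.card (Subgroup.centralizer {x} ⊓ A : Subgroup G)) *
            Nat.card B) * Nat.card G := (Nat.mul_lt_mul_right hGpos).mpr hsum
      _ = _ := Nat.mul_assoc _ _ _
  rw [relCommDeg, relCommDeg, div_lt_div_iff₀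
    (by exact_mod_cast Nat.mul_pos hBpos hGpos)
    (by exact_mod_cast Nat.mul_pos hApos hGpos)]
  exact_mod_cast hnat
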